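/- arXiv:2301.11740 — 3 statements merged into one kernel-verified Lean document; each statement's English description precedes it below -/
import Mathlib

section
/- Let 𝔸 = (A, ≤, →, Σ) be an implicative algebra with |A| < κ for a strongly inaccessible cardinal κ, and let W, ∈_W, =_W be as defined below. Then there exists j ∈ Σ such that j ≤ ⨅_{α∈W} ⨅_{u∈dom(α)} (α(u) → (u ∈_W α)). -/
universe u


/-- An implicative algebra `𝔸 = (A, ≤, →, Σ)`:  a complete lattice `(A, ≤)` together with an
implication `imp` which is antitone in its first argument, monotone in its second argument and
turns infima in the second argument into infima, and a separator `Sig ⊆ A` which is upward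
closed, closed under modus ponens and contains the combinators `K` and `S`. -/
structure ImplicativeAlgebra (A : Type u) [CompleteLattice A] where
  imp : A → A → A
  imp_antitone : ∀ ⦃a a' b : A⦄, a ≤ a' → imp a' b ≤ imp a b
  imp_monotone : ∀ ⦃a b b' : A⦄, b ≤ b' → imp a b ≤ imp a b'
  imp_sInf : ∀ (a : A) (S : Set A), imp a (sInf S) = ⨅ b ∈ S, imp a b
  Sig : Set A
  Sig_upward : ∀ ⦃a b : A⦄, a ∈ Sig → a ≤ b → b ∈ Sig
  Sig_mp : ∀ ⦃a b : A⦄, imp a b ∈ Sig → a ∈ Sig → b ∈ Sig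
  Sig_K : (⨅ a : A, ⨅ b : A, imp a (imp b a)) ∈ Sig
  Sig_S : (⨅ a : A, ⨅ b : A, ⨅ c : A,
      imp (imp a (imp b c)) (imp (imp a b) (imp a c))) ∈ Sig

namespace ImplicativeAlgebra

variable {A : Type u} [CompleteLattice A]

/-- `a × b := ⨅ x, ((a → (b → x)) → x)`. -/
def times (IA : ImplicativeAlgebra A) (a b : A) : A :=
  ⨅ x : A, IA.imp (IA.imp a (IA.imp b x)) x

/-- `a + b := ⨅ x, ((a → x) → ((b → x) → x))`. -/
def plus (IA : ImplicativeAlgebra A) (a b : A) : A :=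
  ⨅ x : A, IA.imp (IA.imp a x) (IA.imp (IA.imp b x) x)

/-- `∃⃗_{i} f i := ⨅ x, ((⨅ i, (f i → x)) → x)`.  (`∀⃗` is just `⨅`.) -/
def aex (IA : ImplicativeAlgebra A) {ι : Sort*} (f : ι → A) : A :=
  ⨅ x : A, IA.imp (⨅ i, IA.imp (f i) x) x

/-- `φ ⊢_{Σ[I]} ψ` iff `⨅ i, (φ i → ψ i) ∈ Σ`. -/
def SigLe (IA : ImplicativeAlgebra A) {ι : Sort*} (f g : ι → A) : Prop :=
  (⨅ i, IA.imp (f i) (g i)) ∈ IA.Sig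

/-- `φ ≡_{Σ[I]} ψ` iff `φ ⊢_{Σ[I]} ψ` and `ψ ⊢_{Σ[I]} φ`. -/
def SigEquiv (IA : ImplicativeAlgebra A) {ι : Sort*} (f g : ι → A) : Prop :=
  IA.SigLe f g ∧ IA.SigLe g f

end ImplicativeAlgebra

/-- Pre-elements of the cumulative hierarchy of partial functions valued in `A`:
an element is an `A`-labelled family of previously constructed elements, i.e. a partial
function (presented by a family indexed by its domain) from earlier elements to `A`. -/
inductive PreW (A : Type u) : Type (u + 1)
  | mk (ι : Type u) (fam : ι → PreW A) (val : ι → A)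

namespace PreW

variable {A : Type u}

/-- The (index type of the) domain of a partial function. -/
def dom : PreW A → Type u
  | ⟨ι, _, _⟩ => ι

/-- The family of elements of the domain. -/
def fam : (w : PreW A) → w.dom → PreW A
  | ⟨_, f, _⟩ => f

/-- The values in `A` of the partial function. -/
def val : (w : PreW A) → w.dom → A
  | ⟨_, _, v⟩ => v

/-- `w` is hereditarily of size `< κ`:  this carves out exactly the elements of the stage
`W_κ` of the hierarchy (for `κ` inaccessible). -/
def HSmall (κ : Cardinal.{u}) : PreW A → Prop
  | ⟨ι, f, _⟩ => Cardinal.mk ι < κ ∧ ∀ i, HSmall κ (f i)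

theorem HSmall.fam {κ : Cardinal.{u}} :
    ∀ {w : PreW A}, w.HSmall κ → ∀ i : w.dom, (w.fam i).HSmall κ
  | ⟨_, _, _⟩, h, i => h.2 i

/-- The rank of an element of the hierarchy. -/
noncomputable def rank : PreW A → Ordinal.{u}
  | ⟨_, f, _⟩ => ⨆ i, Order.succ (rank (f i))

theorem rank_lt_mk {ι : Type u} (f : ι → PreW A) (v : ι → A) (i : ι) :
    (f i).rank < (PreW.mk ι f v).rank := by
  have h : Order.succ (f i).rank ≤ ⨆ j, Order.succ (f j).rank := Ordinal.le_iSup _ i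
  have : (f i).rank < ⨆ j, Order.succ (f j).rank :=
    lt_of_lt_of_le (Order.lt_succ _) h
  simpa [rank] using this

end PreW

namespace ImplicativeAlgebra

variable {A : Type u} [CompleteLattice A]

/-- `α =_W β`, defined by recursion on rank:
`α =_W β := (α ⊆_W β) × (β ⊆_W α)` where
`α ⊆_W β := ∀⃗_{t ∈ dom α} (α t → (fam α t ∈_W β))` and
`γ ∈_W β := ∃⃗_{s ∈ dom β} (β s × (fam β s =_W γ))`. -/
noncomputable def eqW (IA : ImplicativeAlgebra A) : PreW A → PreW A → A
  | ⟨ι₁, f₁, v₁⟩, ⟨ι₂, f₂, v₂⟩ =>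
    IA.times
      (⨅ t : ι₁, IA.imp (v₁ t)
        (IA.aex fun s : ι₂ => IA.times (v₂ s) (IA.eqW (f₂ s) (f₁ t))))
      (⨅ t : ι₂, IA.imp (v₂ t)
        (IA.aex fun s : ι₁ => IA.times (v₁ s) (IA.eqW (f₁ s) (f₂ t))))
termination_by α β => max α.rank β.rank
decreasing_by
  · exact max_lt (lt_of_lt_of_le (PreW.rank_lt_mk f₂ v₂ s) (le_max_right _ _))
      (lt_of_lt_of_le (PreW.rank_lt_mk f₁ v₁ t) (le_max_left _ _))
  · exact max_lt (lt_of_lt_of_le (PreW.rank_lt_mk f₁ v₁ s) (le_max_left _ _))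
      (lt_of_lt_of_le (PreW.rank_lt_mk f₂ v₂ t) (le_max_right _ _))

/-- `α ∈_W β := ∃⃗_{s ∈ dom β} (β s × (fam β s =_W α))`. -/
noncomputable def memW (IA : ImplicativeAlgebra A) (α β : PreW A) : A :=
  IA.aex fun s : β.dom => IA.times (β.val s) (IA.eqW (β.fam s) α)

/-- `α ⊆_W β := ∀⃗_{t ∈ dom α} (α t → (fam α t ∈_W β))`. -/
noncomputable def subW (IA : ImplicativeAlgebra A) (α β : PreW A) : A :=
  ⨅ t : α.dom, IA.imp (α.val t) (IA.memW (α.fam t) β)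

end ImplicativeAlgebra

/-- The stage `W = W_κ` of the hierarchy: all hereditarily `< κ`-sized elements. -/
def WSet (A : Type u) (κ : Cardinal.{u}) : Type (u + 1) :=
  {w : PreW A // w.HSmall κ}

/-- An element of the domain of `w ∈ W`, as an element of `W`. -/
def WSet.fam {A : Type u} {κ : Cardinal.{u}} (w : WSet A κ) (i : w.1.dom) : WSet A κ :=
  ⟨w.1.fam i, w.2.fam i⟩

/-- Formulas (in context of length `n`) of the first-order language of set theory, with
(de Bruijn-style) variables `Fin n`, binary predicates `∈` and `=`, connectives `⊥`, `∧`, `∨`,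
`→` and quantifiers `∃`, `∀` (binding the last variable of the enlarged context). -/
inductive SetFormula : ℕ → Type
  | bot {n : ℕ} : SetFormula n
  | mem {n : ℕ} (i j : Fin n) : SetFormula n
  | eq {n : ℕ} (i j : Fin n) : SetFormula n
  | and {n : ℕ} (φ ψ : SetFormula n) : SetFormula n
  | or {n : ℕ} (φ ψ : SetFormula n) : SetFormula n
  | imp {n : ℕ} (φ ψ : SetFormula n) : SetFormula n
  | ex {n : ℕ} (φ : SetFormula (n + 1)) : SetFormula n
  | all {n : ℕ} (φ : SetFormula (n + 1)) : SetFormula n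

namespace SetFormula

/-- Renaming of variables (since the only terms of the language of set theory are variables,
substitution is a special case). -/
def rename : {n m : ℕ} → (Fin n → Fin m) → SetFormula n → SetFormula m
  | _, _, _, .bot => .bot
  | _, _, f, .mem i j => .mem (f i) (f j)
  | _, _, f, .eq i j => .eq (f i) (f j)
  | _, _, f, .and φ ψ => .and (φ.rename f) (ψ.rename f)
  | _, _, f, .or φ ψ => .or (φ.rename f) (ψ.rename f)
  | _, _, f, .imp φ ψ => .imp (φ.rename f) (ψ.rename f)
  | _, _, f, .ex φ => .ex (φ.rename (Fin.snoc (Fin.castSucc ∘ f) (Fin.last _)))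
  | _, _, f, .all φ => .all (φ.rename (Fin.snoc (Fin.castSucc ∘ f) (Fin.last _)))

/-- Universal closure `∀x₁ … ∀xₙ φ` of a formula in context of length `n`. -/
def allClose : {n : ℕ} → SetFormula n → SetFormula 0
  | 0, φ => φ
  | _ + 1, φ => allClose (.all φ)

end SetFormula

namespace ImplicativeAlgebra

variable {A : Type u} [CompleteLattice A]

/-- The interpretation `‖φ[x₁,…,xₙ]‖ : Wⁿ → A` of a formula in context, by recursion on the
structure of `φ`:  atomic formulas are interpreted by `∈_W` and `=_W`, `∧` by `×`, `∨` by `+`,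
`→` by `→`, `∃` by `∃⃗` over `W` and `∀` by `∀⃗` (i.e. `⨅`) over `W`. -/
noncomputable def interp (IA : ImplicativeAlgebra A) (κ : Cardinal.{u}) :
    {n : ℕ} → SetFormula n → (Fin n → WSet A κ) → A
  | _, .bot, _ => ⊥
  | _, .mem i j, v => IA.memW (v i).1 (v j).1
  | _, .eq i j, v => IA.eqW (v i).1 (v j).1
  | _, .and φ ψ, v => IA.times (IA.interp κ φ v) (IA.interp κ ψ v)
  | _, .or φ ψ, v => IA.plus (IA.interp κ φ v) (IA.interp κ ψ v)
  | _, .imp φ ψ, v => IA.imp (IA.interp κ φ v) (IA.interp κ ψ v)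
  | _, .ex φ, v => IA.aex fun β : WSet A κ => IA.interp κ φ (Fin.snoc v β)
  | _, .all φ, v => ⨅ β : WSet A κ, IA.interp κ φ (Fin.snoc v β)

end ImplicativeAlgebra


namespace StmtAux

variable {A : Type u} [CompleteLattice A]

noncomputable def app (IA : ImplicativeAlgebra A) (a b : A) : A :=
  sInf {c | a ≤ IA.imp b c}

variable {IA : ImplicativeAlgebra A}

lemma le_imp_app (a b : A) : a ≤ IA.imp b (app IA a b) := by
  rw [app, IA.imp_sInf]
  exact le_iInf₂ fun c hc => hc

lemma app_le {a b c : A} (h : a ≤ IA.imp b c) : app IA a b ≤ c := sInf_le h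

lemma le_imp_of_app_le {a b c : A} (h : app IA a b ≤ c) : a ≤ IA.imp b c :=
  (le_imp_app a b).trans (IA.imp_monotone h)

lemma app_mono {a a' b b' : A} (ha : a ≤ a') (hb : b ≤ b') :
    app IA a b ≤ app IA a' b' :=
  app_le (ha.trans ((le_imp_app a' b').trans (IA.imp_antitone hb)))

lemma app_mem_Sig {a b : A} (ha : a ∈ IA.Sig) (hb : b ∈ IA.Sig) :
    app IA a b ∈ IA.Sig :=
  IA.Sig_mp (IA.Sig_upward ha (le_imp_app a b)) hb

noncomputable def Kel (IA : ImplicativeAlgebra A) : A :=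
  ⨅ a : A, ⨅ b : A, IA.imp a (IA.imp b a)

noncomputable def Sel (IA : ImplicativeAlgebra A) : A :=
  ⨅ a : A, ⨅ b : A, ⨅ c : A,
    IA.imp (IA.imp a (IA.imp b c)) (IA.imp (IA.imp a b) (IA.imp a c))

lemma Kel_le (a b : A) : Kel IA ≤ IA.imp a (IA.imp b a) :=
  (iInf_le _ a).trans (iInf_le _ b)

lemma Sel_le (a b c : A) : Sel IA ≤
    IA.imp (IA.imp a (IA.imp b c)) (IA.imp (IA.imp a b) (IA.imp a c)) :=
  ((iInf_le _ a).trans (iInf_le _ b)).trans (iInf_le _ c)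

lemma imp_iInf {ι : Sort*} (a : A) (g : ι → A) :
    IA.imp a (⨅ i, g i) = ⨅ i, IA.imp a (g i) := by
  rw [iInf, IA.imp_sInf, iInf_range]

/-- Combinatory terms with constants. -/
inductive CT (A : Type u) : ℕ → Type u
  | var {n} : Fin n → CT A n
  | Kc {n} : CT A n
  | Sc {n} : CT A n
  | el {n} (a : A) : CT A n
  | ap {n} : CT A n → CT A n → CT A n

noncomputable def ev (IA : ImplicativeAlgebra A) :
    {n : ℕ} → CT A n → (Fin n → A) → A
  | _, .var i, env => env i
  | _, .Kc, _ => Kel IA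
  | _, .Sc, _ => Sel IA
  | _, .el a, _ => a
  | _, .ap t u, env => app IA (ev IA t env) (ev IA u env)

/-- Bracket abstraction of the last variable. -/
def lam : {n : ℕ} → CT A (n + 1) → CT A n
  | _, .var i =>
      if h : i = Fin.last _ then .ap (.ap .Sc .Kc) .Kc
      else .ap .Kc (.var (i.castPred h))
  | _, .Kc => .ap .Kc .Kc
  | _, .Sc => .ap .Kc .Sc
  | _, .el a => .ap .Kc (.el a)
  | _, .ap t u => .ap (.ap .Sc (lam t)) (lam u)

lemma SKK_le (a : A) :
    app IA (app IA (Sel IA) (Kel IA)) (Kel IA) ≤ IA.imp a a := by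
  have h1 : app IA (Sel IA) (Kel IA) ≤
      IA.imp (IA.imp a (IA.imp a a)) (IA.imp a a) :=
    app_le ((Sel_le a (IA.imp a a) a).trans
      (IA.imp_antitone (Kel_le a (IA.imp a a))))
  exact app_le (h1.trans (IA.imp_antitone (Kel_le a a)))

lemma ev_lam {n : ℕ} (t : CT A (n + 1)) (env : Fin n → A) (a : A) :
    ev IA (lam t) env ≤ IA.imp a (ev IA t (Fin.snoc env a)) := by
  induction t with
  | var i =>
    by_cases h : i = Fin.last n
    · subst h
      simp only [lam, dif_pos, ev, Fin.snoc_last]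
      exact SKK_le a
    · have hi : (Fin.snoc env a : Fin (n+1) → A) i = env (i.castPred h) := by
        conv_lhs => rw [← Fin.castSucc_castPred i h]
        rw [Fin.snoc_castSucc]
      simp only [lam, dif_neg h, ev, hi]
      exact app_le (Kel_le _ a)
  | Kc => simp only [lam, ev]; exact app_le (Kel_le _ a)
  | Sc => simp only [lam, ev]; exact app_le (Kel_le _ a)
  | el b => simp only [lam, ev]; exact app_le (Kel_le _ a)
  | ap t u iht ihu =>
    simp only [lam, ev]
    set T := ev IA t (Fin.snoc env a)
    set U := ev IA u (Fin.snoc env a)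
    have h1 : ev IA (lam t) env ≤ IA.imp a (IA.imp U (app IA T U)) :=
      (iht).trans (IA.imp_monotone (le_imp_app T U))
    have h2 : app IA (Sel IA) (ev IA (lam t) env) ≤
        IA.imp (IA.imp a U) (IA.imp a (app IA T U)) :=
      app_le ((Sel_le a U (app IA T U)).trans (IA.imp_antitone h1))
    exact app_le (h2.trans (IA.imp_antitone ihu))

lemma app_ev_lam {n : ℕ} (t : CT A (n + 1)) (env : Fin n → A) (a : A) :
    app IA (ev IA (lam t) env) a ≤ ev IA t (Fin.snoc env a) :=
  app_le (ev_lam t env a)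

def Good (S : Set A) : {n : ℕ} → CT A n → Prop
  | _, .var _ => True
  | _, .Kc => True
  | _, .Sc => True
  | _, .el a => a ∈ S
  | _, .ap t u => Good S t ∧ Good S u

lemma Good.lam {n : ℕ} {t : CT A (n + 1)} (h : Good IA.Sig t) :
    Good IA.Sig (StmtAux.lam t) := by
  induction t with
  | var i =>
    by_cases hi : i = Fin.last n <;>
      simp [StmtAux.lam, hi, Good]
  | Kc => simp [StmtAux.lam, Good]
  | Sc => simp [StmtAux.lam, Good]
  | el a => simp only [StmtAux.lam, Good] at h ⊢; exact ⟨trivial, h⟩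
  | ap t u iht ihu =>
    simp only [StmtAux.lam, Good] at h ⊢
    exact ⟨⟨trivial, iht h.1⟩, ihu h.2⟩

lemma ev_mem_Sig {n : ℕ} {t : CT A n} (h : Good IA.Sig t)
    {env : Fin n → A} (henv : ∀ i, env i ∈ IA.Sig) :
    ev IA t env ∈ IA.Sig := by
  induction t with
  | var i => simpa only [ev] using henv i
  | Kc => simpa only [ev, Kel] using IA.Sig_K
  | Sc => simpa only [ev, Sel] using IA.Sig_S
  | el a => simpa only [ev, Good] using h
  | ap t u iht ihu =>
    simp only [Good] at h
    simp only [ev]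
    exact app_mem_Sig (iht h.1) (ihu h.2)

end StmtAux

section Realizers

variable {A : Type u} [CompleteLattice A]

open StmtAux

/-- The pairing combinator `λp.λq.λf. f p q`. -/
noncomputable def StmtAux.Pt (A : Type u) : CT A 0 :=
  lam (lam (lam (.ap (.ap (.var (Fin.last 2))
    (.var ((Fin.last 0).castSucc.castSucc))) (.var ((Fin.last 1).castSucc)))))

noncomputable def StmtAux.pA (IA : ImplicativeAlgebra A) : A :=
  ev IA (Pt A) Fin.elim0

lemma StmtAux.pA_mem_Sig {IA : ImplicativeAlgebra A} : pA IA ∈ IA.Sig :=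
  ev_mem_Sig (Good.lam (Good.lam (Good.lam (by simp [Good]))))
    (fun i => i.elim0)

lemma StmtAux.pA_spec {IA : ImplicativeAlgebra A} {p q a b : A}
    (hp : p ≤ a) (hq : q ≤ b) :
    app IA (app IA (pA IA) p) q ≤ IA.times a b := by
  have h2 : app IA (app IA (pA IA) p) q ≤
      ev IA (lam (.ap (.ap (.var (Fin.last 2))
        (.var ((Fin.last 0).castSucc.castSucc))) (.var ((Fin.last 1).castSucc))))
        (Fin.snoc (Fin.snoc Fin.elim0 p) q) :=
    (app_mono (app_ev_lam _ _ _) le_rfl).trans (app_ev_lam _ _ _)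
  rw [ImplicativeAlgebra.times]
  refine le_iInf fun x => ?_
  have h3 := h2.trans (ev_lam _ (Fin.snoc (Fin.snoc Fin.elim0 p) q)
    (IA.imp a (IA.imp b x)))
  simp only [ev, Fin.snoc_last, Fin.snoc_castSucc] at h3
  refine h3.trans (IA.imp_monotone ?_)
  exact app_le ((app_le (IA.imp_antitone hp)).trans (IA.imp_antitone hq))

/-- `λx.λf. f (x x f)`. -/
noncomputable def StmtAux.At (A : Type u) : CT A 0 :=
  lam (lam (.ap (.var (Fin.last 1))
    (.ap (.ap (.var ((Fin.last 0).castSucc)) (.var ((Fin.last 0).castSucc)))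
      (.var (Fin.last 1)))))

/-- `λj.λa.λk. k (pair a (pair j j))`. -/
noncomputable def StmtAux.Ft (IA : ImplicativeAlgebra A) : CT A 0 :=
  lam (lam (lam (.ap (.var (Fin.last 2))
    (.ap (.ap (.el (pA IA)) (.var ((Fin.last 1).castSucc)))
      (.ap (.ap (.el (pA IA)) (.var ((Fin.last 0).castSucc.castSucc)))
        (.var ((Fin.last 0).castSucc.castSucc)))))))

noncomputable def StmtAux.aA (IA : ImplicativeAlgebra A) : A := ev IA (At A) Fin.elim0
noncomputable def StmtAux.fA (IA : ImplicativeAlgebra A) : A := ev IA (Ft IA) Fin.elim0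

/-- The global realizer. -/
noncomputable def StmtAux.jel (IA : ImplicativeAlgebra A) : A :=
  app IA (app IA (aA IA) (aA IA)) (fA IA)

lemma StmtAux.jel_mem_Sig {IA : ImplicativeAlgebra A} : jel IA ∈ IA.Sig := by
  have ha : aA IA ∈ IA.Sig :=
    ev_mem_Sig (Good.lam (Good.lam (by simp [Good]))) (fun i => i.elim0)
  have hf : fA IA ∈ IA.Sig :=
    ev_mem_Sig (Good.lam (Good.lam (Good.lam (by simp [Good, pA_mem_Sig]))))
      (fun i => i.elim0)
  exact app_mem_Sig (app_mem_Sig ha ha) hf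

lemma StmtAux.jel_unfold {IA : ImplicativeAlgebra A} :
    jel IA ≤ app IA (fA IA) (jel IA) := by
  have h2 : jel IA ≤
      ev IA (.ap (.var (Fin.last 1))
        (.ap (.ap (.var ((Fin.last 0).castSucc)) (.var ((Fin.last 0).castSucc)))
          (.var (Fin.last 1))))
        (Fin.snoc (Fin.snoc Fin.elim0 (aA IA)) (fA IA)) :=
    (app_mono (app_ev_lam _ _ _) le_rfl).trans (app_ev_lam _ _ _)
  simp only [ev, Fin.snoc_last, Fin.snoc_castSucc] at h2
  exact h2

lemma StmtAux.jel_step {IA : ImplicativeAlgebra A} (b k : A) :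
    app IA (app IA (app IA (fA IA) (jel IA)) b) k ≤
      app IA k (app IA (app IA (pA IA) b)
        (app IA (app IA (pA IA) (jel IA)) (jel IA))) := by
  have h3 : app IA (app IA (app IA (fA IA) (jel IA)) b) k ≤
      ev IA (.ap (.var (Fin.last 2))
        (.ap (.ap (.el (pA IA)) (.var ((Fin.last 1).castSucc)))
          (.ap (.ap (.el (pA IA)) (.var ((Fin.last 0).castSucc.castSucc)))
            (.var ((Fin.last 0).castSucc.castSucc)))))
        (Fin.snoc (Fin.snoc (Fin.snoc Fin.elim0 (jel IA)) b) k) :=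
    (app_mono ((app_mono (app_ev_lam _ _ _) le_rfl).trans
      (app_ev_lam _ _ _)) le_rfl).trans (app_ev_lam _ _ _)
  simpa only [ev, Fin.snoc_last, Fin.snoc_castSucc] using h3

/-- The inner meet of the statement, for `γ : PreW A`. -/
noncomputable def StmtAux.Mg (IA : ImplicativeAlgebra A) (γ : PreW A) : A :=
  ⨅ t : γ.dom, IA.imp (γ.val t) (IA.memW (γ.fam t) γ)

lemma StmtAux.eqW_self {IA : ImplicativeAlgebra A} (γ : PreW A) :
    IA.eqW γ γ = IA.times (Mg IA γ) (Mg IA γ) := by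
  obtain ⟨ι, f, v⟩ := γ
  rw [ImplicativeAlgebra.eqW]
  rfl

lemma StmtAux.jel_le_Mg {IA : ImplicativeAlgebra A} (γ : PreW A) :
    jel IA ≤ Mg IA γ := by
  induction γ with
  | mk ι f v ih =>
    refine le_iInf fun t => ?_
    show jel IA ≤ IA.imp (v t) (IA.memW (f t) (PreW.mk ι f v))
    rw [ImplicativeAlgebra.memW, ImplicativeAlgebra.aex, imp_iInf]
    refine le_iInf fun x => ?_
    refine le_imp_of_app_le (le_imp_of_app_le ?_)
    set K : A := ⨅ s : (PreW.mk ι f v).dom,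
      IA.imp (IA.times ((PreW.mk ι f v).val s)
        (IA.eqW ((PreW.mk ι f v).fam s) (f t))) x with hK
    have hpair : app IA (app IA (pA IA) (v t))
        (app IA (app IA (pA IA) (jel IA)) (jel IA)) ≤
        IA.times (v t) (IA.eqW (f t) (f t)) := by
      refine pA_spec le_rfl ?_
      rw [eqW_self (f t)]
      exact pA_spec (ih t) (ih t)
    calc app IA (app IA (jel IA) (v t)) K
        ≤ app IA (app IA (app IA (fA IA) (jel IA)) (v t)) K :=
          app_mono (app_mono jel_unfold le_rfl) le_rfl
      _ ≤ app IA K (app IA (app IA (pA IA) (v t))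
            (app IA (app IA (pA IA) (jel IA)) (jel IA))) := jel_step _ _
      _ ≤ x := app_le ((iInf_le _ t).trans (IA.imp_antitone hpair))

end Realizers

theorem stmt1 {A : Type u} [CompleteLattice A] (IA : ImplicativeAlgebra A)
    (κ : Cardinal.{u}) (hκ : κ.IsInaccessible) (hA : Cardinal.mk A < κ) :
    ∃ j ∈ IA.Sig, j ≤ ⨅ α : WSet A κ, ⨅ u : α.1.dom,
      IA.imp (α.1.val u) (IA.memW (α.1.fam u) α.1) := by
  exact ⟨StmtAux.jel IA, StmtAux.jel_mem_Sig,
    le_iInf fun α => StmtAux.jel_le_Mg α.1⟩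
end

section
/- Let 𝔸 = (A, ≤, →, Σ) be an implicative algebra with |A| < κ for a strongly inaccessible cardinal κ, and let W, ∈_W, =_W be as defined below. Then there exists s₁ ∈ Σ such that s₁ ≤ ⨅_{α,β,γ∈W} (((α =_W β) × (γ ∈_W α)) → (γ ∈_W β)). -/
universe u

namespace PreW

variable {A : Type u}

theorem rank_fam_lt (w : PreW A) (i : w.dom) : (w.fam i).rank < w.rank := by
  cases w with
  | mk ι f v => exact PreW.rank_lt_mk f v i

end PreW
/-! ### Auxiliary machinery: application, combinators, terms -/

namespace ImplicativeAlgebra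

variable {A : Type u} [CompleteLattice A] (IA : ImplicativeAlgebra A)

/-- Application in an implicative algebra. -/
def iapp (a b : A) : A := sInf {c | a ≤ IA.imp b c}

lemma le_imp_iapp (a b : A) : a ≤ IA.imp b (IA.iapp a b) := by
  rw [iapp, IA.imp_sInf]
  exact le_iInf fun c => le_iInf fun hc => hc

lemma iapp_le {a b c : A} (h : a ≤ IA.imp b c) : IA.iapp a b ≤ c := sInf_le h

lemma iapp_le_of_le {a b c x : A} (h : a ≤ IA.imp b c) (hx : x ≤ b) : IA.iapp a x ≤ c :=
  IA.iapp_le (le_trans h (IA.imp_antitone hx))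

lemma le_imp {a b c : A} (h : IA.iapp a b ≤ c) : a ≤ IA.imp b c :=
  (IA.le_imp_iapp a b).trans (IA.imp_monotone h)

lemma iapp_mono {a a' b b' : A} (ha : a ≤ a') (hb : b ≤ b') : IA.iapp a b ≤ IA.iapp a' b' :=
  IA.iapp_le (ha.trans ((IA.le_imp (le_refl (IA.iapp a' b'))).trans (IA.imp_antitone hb)))

lemma iapp_mem {a b : A} (ha : a ∈ IA.Sig) (hb : b ∈ IA.Sig) : IA.iapp a b ∈ IA.Sig :=
  IA.Sig_mp (IA.Sig_upward ha (IA.le_imp_iapp a b)) hb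

/-- The combinator `K`. -/
def kE : A := ⨅ a : A, ⨅ b : A, IA.imp a (IA.imp b a)

/-- The combinator `S`. -/
def sE : A := ⨅ a : A, ⨅ b : A, ⨅ c : A,
  IA.imp (IA.imp a (IA.imp b c)) (IA.imp (IA.imp a b) (IA.imp a c))

lemma kE_mem : IA.kE ∈ IA.Sig := IA.Sig_K
lemma sE_mem : IA.sE ∈ IA.Sig := IA.Sig_S

lemma kE_le (a b : A) : IA.kE ≤ IA.imp a (IA.imp b a) :=
  iInf_le_of_le a (iInf_le _ b)

lemma sE_le (a b c : A) :
    IA.sE ≤ IA.imp (IA.imp a (IA.imp b c)) (IA.imp (IA.imp a b) (IA.imp a c)) :=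
  iInf_le_of_le a (iInf_le_of_le b (iInf_le _ c))

lemma iapp2_le {m a b c x y : A} (hm : m ≤ IA.imp a (IA.imp b c)) (hx : x ≤ a) (hy : y ≤ b) :
    IA.iapp (IA.iapp m x) y ≤ c :=
  IA.iapp_le_of_le (IA.iapp_le_of_le hm hx) hy

lemma kE_red (a b : A) : IA.iapp (IA.iapp IA.kE a) b ≤ a :=
  IA.iapp2_le (IA.kE_le a b) le_rfl le_rfl

lemma sE_red (x y z : A) :
    IA.iapp (IA.iapp (IA.iapp IA.sE x) y) z ≤ IA.iapp (IA.iapp x z) (IA.iapp y z) := by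
  have hx : x ≤ IA.imp z (IA.imp (IA.iapp y z) (IA.iapp (IA.iapp x z) (IA.iapp y z))) :=
    (IA.le_imp_iapp x z).trans (IA.imp_monotone (IA.le_imp_iapp _ _))
  have hy : y ≤ IA.imp z (IA.iapp y z) := IA.le_imp_iapp y z
  have h1 := IA.iapp_le_of_le (IA.sE_le z (IA.iapp y z) (IA.iapp (IA.iapp x z) (IA.iapp y z))) hx
  have h2 := IA.iapp_le_of_le h1 hy
  exact IA.iapp_le_of_le h2 le_rfl

/-- The identity combinator `I = S K K`. -/
def iE : A := IA.iapp (IA.iapp IA.sE IA.kE) IA.kE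

lemma iE_le (b : A) : IA.iE ≤ IA.imp b b :=
  IA.le_imp ((IA.sE_red _ _ _).trans (IA.kE_red b (IA.iapp IA.kE b)))

/-- The combinator `K I`. -/
def kiE : A := IA.iapp IA.kE IA.iE

lemma kiE_le (a b : A) : IA.kiE ≤ IA.imp a (IA.imp b b) :=
  (IA.iapp_le (IA.kE_le IA.iE a)).trans (IA.imp_monotone (IA.iE_le b))

lemma le_fst {p a b : A} (h : p ≤ IA.times a b) : IA.iapp p IA.kE ≤ a :=
  IA.iapp_le_of_le (h.trans (iInf_le _ a)) (IA.kE_le a b)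

lemma le_snd {p a b : A} (h : p ≤ IA.times a b) : IA.iapp p IA.kiE ≤ b :=
  IA.iapp_le_of_le (h.trans (iInf_le _ b)) (IA.kiE_le a b)

lemma aex_elim {ι : Sort*} {f : ι → A} {p g c : A} (hp : p ≤ IA.aex f)
    (hg : ∀ i, g ≤ IA.imp (f i) c) : IA.iapp p g ≤ c :=
  IA.iapp_le_of_le (hp.trans (iInf_le _ c)) (le_iInf hg)

/-- Unfolding of `eqW`. -/
lemma eqW_def (α β : PreW A) :
    IA.eqW α β = IA.times (IA.subW α β) (IA.subW β α) := by
  cases α with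
  | mk ι₁ f₁ v₁ =>
    cases β with
    | mk ι₂ f₂ v₂ =>
      rw [eqW]
      rfl

end ImplicativeAlgebra

/-- Combinatory terms with free variables indexed by `Fin n`. -/
inductive Tm : ℕ → Type
  | var {n} : Fin n → Tm n
  | K {n} : Tm n
  | S {n} : Tm n
  | ap {n} : Tm n → Tm n → Tm n

namespace Tm

/-- Weakening. -/
def wk : {n : ℕ} → Tm n → Tm (n + 1)
  | _, var i => var i.castSucc
  | _, K => K
  | _, S => S
  | _, ap t u => ap t.wk u.wk

/-- Bracket abstraction of the last variable. -/
def abs : {n : ℕ} → Tm (n + 1) → Tm n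
  | n, var i => Fin.lastCases (ap (ap S K) K) (fun j => ap K (var j)) i
  | _, K => ap K K
  | _, S => ap K S
  | _, ap t u => ap (ap S t.abs) u.abs

end Tm

namespace ImplicativeAlgebra

variable {A : Type u} [CompleteLattice A] (IA : ImplicativeAlgebra A)

/-- Evaluation of terms. -/
def evalT (IA : ImplicativeAlgebra A) : {n : ℕ} → Tm n → (Fin n → A) → A
  | _, .var i, env => env i
  | _, .K, _ => IA.kE
  | _, .S, _ => IA.sE
  | _, .ap t u, env => IA.iapp (IA.evalT t env) (IA.evalT u env)

lemma evalT_wk {n : ℕ} (t : Tm n) (env : Fin n → A) (a : A) :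
    IA.evalT t.wk (Fin.snoc env a) = IA.evalT t env := by
  induction t with
  | var i => simp [Tm.wk, evalT, Fin.snoc_castSucc]
  | K => simp [Tm.wk, evalT]
  | S => simp [Tm.wk, evalT]
  | ap t u iht ihu => simp [Tm.wk, evalT, iht, ihu]

lemma evalT_abs {n : ℕ} (t : Tm (n + 1)) (env : Fin n → A) (a : A) :
    IA.iapp (IA.evalT t.abs env) a ≤ IA.evalT t (Fin.snoc env a) := by
  induction t with
  | var i =>
    induction i using Fin.lastCases with
    | last =>
      simp only [Tm.abs, Fin.lastCases_last, evalT, Fin.snoc_last]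
      exact (IA.sE_red _ _ _).trans (IA.kE_red a (IA.iapp IA.kE a))
    | cast j =>
      simp only [Tm.abs, Fin.lastCases_castSucc, evalT, Fin.snoc_castSucc]
      exact IA.kE_red _ _
  | K =>
    simp only [Tm.abs, evalT]
    exact IA.kE_red _ _
  | S =>
    simp only [Tm.abs, evalT]
    exact IA.kE_red _ _
  | ap t u iht ihu =>
    simp only [Tm.abs, evalT]
    exact (IA.sE_red _ _ _).trans (IA.iapp_mono iht ihu)

lemma evalT_mem {n : ℕ} (t : Tm n) (env : Fin n → A) (h : ∀ i, env i ∈ IA.Sig) :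
    IA.evalT t env ∈ IA.Sig := by
  induction t with
  | var i => simpa [evalT] using h i
  | K => simpa [evalT] using IA.kE_mem
  | S => simpa [evalT] using IA.sE_mem
  | ap t u iht ihu => simpa [evalT] using IA.iapp_mem iht ihu

end ImplicativeAlgebra

namespace Tm

/-- First projection. -/
def fstT {n} (t : Tm n) : Tm n := .ap t .K
/-- Second projection. -/
def sndT {n} (t : Tm n) : Tm n := .ap t (.ap .K (.ap (.ap .S .K) .K))
/-- Pairing. -/
def pairT {n} (x y : Tm n) : Tm n := abs (.ap (.ap (.var (Fin.last n)) x.wk) y.wk)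
/-- Existential introduction. -/
def exiT {n} (x : Tm n) : Tm n := abs (.ap (.var (Fin.last n)) x.wk)

end Tm

namespace ImplicativeAlgebra

variable {A : Type u} [CompleteLattice A] (IA : ImplicativeAlgebra A)

lemma evalT_fstT {n} (t : Tm n) (env : Fin n → A) :
    IA.evalT t.fstT env = IA.iapp (IA.evalT t env) IA.kE := by simp [Tm.fstT, evalT]

lemma evalT_sndT {n} (t : Tm n) (env : Fin n → A) :
    IA.evalT t.sndT env = IA.iapp (IA.evalT t env) IA.kiE := by
  simp [Tm.sndT, evalT, kiE, iE]

lemma fstT_le {n} {t : Tm n} {env : Fin n → A} {a b : A}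
    (h : IA.evalT t env ≤ IA.times a b) : IA.evalT t.fstT env ≤ a := by
  rw [IA.evalT_fstT]; exact IA.le_fst h

lemma sndT_le {n} {t : Tm n} {env : Fin n → A} {a b : A}
    (h : IA.evalT t env ≤ IA.times a b) : IA.evalT t.sndT env ≤ b := by
  rw [IA.evalT_sndT]; exact IA.le_snd h

lemma pairT_le {n} {x y : Tm n} {env : Fin n → A} {a b : A}
    (hx : IA.evalT x env ≤ a) (hy : IA.evalT y env ≤ b) :
    IA.evalT (Tm.pairT x y) env ≤ IA.times a b := by
  refine le_iInf fun c => IA.le_imp ?_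
  refine (IA.evalT_abs _ env (IA.imp a (IA.imp b c))).trans ?_
  simp only [evalT, Fin.snoc_last, evalT_wk]
  exact IA.iapp2_le le_rfl hx hy

lemma exiT_le {n} {x : Tm n} {env : Fin n → A} {ι : Sort*} {f : ι → A} (j : ι)
    (hx : IA.evalT x env ≤ f j) : IA.evalT (Tm.exiT x) env ≤ IA.aex f := by
  refine le_iInf fun c => IA.le_imp ?_
  refine (IA.evalT_abs _ env _).trans ?_
  simp only [evalT, Fin.snoc_last, evalT_wk]
  exact IA.iapp_le_of_le (iInf_le _ j) hx

end ImplicativeAlgebra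

namespace ImplicativeAlgebra

variable {A : Type u} [CompleteLattice A] (IA : ImplicativeAlgebra A)

/-- The branch term used for transitivity of `=_W`. -/
def branchTm {n : ℕ} (f g r : Tm n) : Tm n :=
  Tm.abs (.ap (.ap f.wk (.var (Fin.last n)))
    (Tm.abs (.ap (.ap g.wk.wk (Tm.fstT (.var (Fin.last (n + 1)))))
      (Tm.abs (Tm.exiT (Tm.pairT (Tm.fstT (.var (Fin.last (n + 2))))
        (.ap (.ap r.wk.wk.wk (Tm.sndT (.var (Fin.last (n + 2)))))
             (Tm.sndT (.var ((Fin.last (n + 1)).castSucc))))))))))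

lemma branchTm_le {n : ℕ} {f g r : Tm n} {env : Fin n → A} {X Y Z : PreW A}
    (hf : IA.evalT f env ≤ IA.subW X Y)
    (hg : IA.evalT g env ≤ IA.subW Y Z)
    (hr : ∀ (t : X.dom) (s : Y.dom) (u : Z.dom),
      IA.evalT r env ≤ IA.imp (IA.eqW (Z.fam u) (Y.fam s))
        (IA.imp (IA.eqW (Y.fam s) (X.fam t)) (IA.eqW (Z.fam u) (X.fam t)))) :
    IA.evalT (branchTm f g r) env ≤ IA.subW X Z := by
  refine le_iInf fun t => IA.le_imp ?_
  rw [branchTm]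
  refine (IA.evalT_abs _ env (X.val t)).trans ?_
  simp only [evalT, Fin.snoc_last, evalT_wk]
  refine IA.aex_elim (f := fun s : Y.dom => IA.times (Y.val s) (IA.eqW (Y.fam s) (X.fam t)))
    (IA.iapp_le_of_le (hf.trans (iInf_le _ t)) le_rfl) fun s => ?_
  refine IA.le_imp ?_
  refine (IA.evalT_abs _ _ _).trans ?_
  simp only [evalT, Fin.snoc_last, Fin.snoc_castSucc, evalT_wk, evalT_fstT, evalT_sndT]
  refine IA.aex_elim (f := fun u : Z.dom => IA.times (Z.val u) (IA.eqW (Z.fam u) (Y.fam s)))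
    (IA.iapp_le_of_le (hg.trans (iInf_le _ s)) (IA.le_fst le_rfl)) fun u => ?_
  refine IA.le_imp ?_
  refine (IA.evalT_abs _ _ _).trans ?_
  refine IA.exiT_le u ?_
  refine IA.pairT_le ?_ ?_
  · refine IA.fstT_le (a := Z.val u) (b := IA.eqW (Z.fam u) (Y.fam s)) ?_
    simp [evalT, Fin.snoc_last]
  · simp only [evalT, Fin.snoc_last, Fin.snoc_castSucc, evalT_wk, evalT_sndT]
    exact IA.iapp2_le (hr t s u) (IA.le_snd le_rfl) (IA.le_snd le_rfl)

/-- Turing's fixed point combinator (half). -/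
def thTm : Tm 0 :=
  Tm.abs (Tm.abs (.ap (.var (Fin.last 1))
    (.ap (.ap (.var ((Fin.last 0).castSucc)) (.var ((Fin.last 0).castSucc)))
      (.var (Fin.last 1)))))

/-- The functional whose fixed point realizes transitivity of `=_W`. -/
def transFTm : Tm 0 :=
  Tm.abs (Tm.abs (Tm.abs (Tm.pairT
    (branchTm (Tm.fstT (.var ((Fin.last 1).castSucc))) (Tm.fstT (.var (Fin.last 2)))
      (.var ((Fin.last 0).castSucc.castSucc)))
    (branchTm (Tm.sndT (.var (Fin.last 2))) (Tm.sndT (.var ((Fin.last 1).castSucc)))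
      (.var ((Fin.last 0).castSucc.castSucc))))))

/-- The uniform realizer of transitivity of `=_W`. -/
def transR : A :=
  IA.iapp (IA.iapp (IA.evalT thTm Fin.elim0) (IA.evalT thTm Fin.elim0))
    (IA.evalT transFTm Fin.elim0)

lemma transR_mem : IA.transR ∈ IA.Sig := by
  have h := IA.evalT_mem thTm Fin.elim0 (fun i => i.elim0)
  exact IA.iapp_mem (IA.iapp_mem h h) (IA.evalT_mem transFTm Fin.elim0 (fun i => i.elim0))

lemma transR_unfold : IA.transR ≤ IA.iapp (IA.evalT transFTm Fin.elim0) IA.transR := by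
  set th := IA.evalT thTm Fin.elim0 with hth
  set Fe := IA.evalT transFTm Fin.elim0 with hFe
  have h1 : IA.iapp th th ≤ IA.evalT
      (Tm.abs (.ap (.var (Fin.last 1))
        (.ap (.ap (.var ((Fin.last 0).castSucc)) (.var ((Fin.last 0).castSucc)))
          (.var (Fin.last 1))))) (Fin.snoc Fin.elim0 th) := by
    conv_lhs => rw [hth, thTm]
    exact IA.evalT_abs _ _ _
  have h2 := IA.evalT_abs
      (.ap (.var (Fin.last 1))
        (.ap (.ap (.var ((Fin.last 0).castSucc)) (.var ((Fin.last 0).castSucc)))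
          (.var (Fin.last 1)))) (Fin.snoc Fin.elim0 th) Fe
  simp only [evalT, Fin.snoc_last, Fin.snoc_castSucc] at h2
  calc IA.transR = IA.iapp (IA.iapp th th) Fe := rfl
    _ ≤ _ := (IA.iapp_mono h1 le_rfl).trans h2

theorem transR_le (x y z : PreW A) :
    IA.transR ≤ IA.imp (IA.eqW x y) (IA.imp (IA.eqW y z) (IA.eqW x z)) := by
  refine IA.le_imp (IA.le_imp ?_)
  set p := IA.eqW x y with hp
  set q := IA.eqW y z with hq
  have step : IA.iapp (IA.iapp IA.transR p) q ≤ IA.iapp (IA.iapp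
      (IA.iapp (IA.evalT transFTm Fin.elim0) IA.transR) p) q :=
    IA.iapp_mono (IA.iapp_mono (IA.transR_unfold) le_rfl) le_rfl
  refine step.trans ?_
  set Fb : Tm 3 := Tm.pairT
    (branchTm (Tm.fstT (.var ((Fin.last 1).castSucc))) (Tm.fstT (.var (Fin.last 2)))
      (.var ((Fin.last 0).castSucc.castSucc)))
    (branchTm (Tm.sndT (.var (Fin.last 2))) (Tm.sndT (.var ((Fin.last 1).castSucc)))
      (.var ((Fin.last 0).castSucc.castSucc))) with hFb
  have e0 : IA.evalT transFTm Fin.elim0 = IA.evalT (Tm.abs (Tm.abs (Tm.abs Fb))) Fin.elim0 := rfl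
  set env3 : Fin 3 → A := Fin.snoc (Fin.snoc (Fin.snoc Fin.elim0 IA.transR) p) q with henv3
  have h3 : IA.iapp (IA.iapp (IA.iapp (IA.evalT transFTm Fin.elim0) IA.transR) p) q
      ≤ IA.evalT Fb env3 := by
    rw [e0]
    refine le_trans (IA.iapp_mono (IA.iapp_mono (IA.evalT_abs _ _ _) le_rfl) le_rfl) ?_
    refine le_trans (IA.iapp_mono (IA.evalT_abs _ _ _) le_rfl) ?_
    exact IA.evalT_abs _ _ _
  refine h3.trans ?_
  rw [IA.eqW_def x z, hFb]
  have hv0 : IA.evalT (.var ((Fin.last 0).castSucc.castSucc) : Tm 3) env3 = IA.transR := by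
    simp only [evalT, henv3, Fin.snoc_castSucc, Fin.snoc_last]
  have hvp : IA.evalT (.var ((Fin.last 1).castSucc) : Tm 3) env3 = p := by
    simp only [evalT, henv3, Fin.snoc_castSucc, Fin.snoc_last]
  have hvq : IA.evalT (.var (Fin.last 2) : Tm 3) env3 = q := by
    simp only [evalT, henv3, Fin.snoc_last]
  refine IA.pairT_le ?_ ?_
  · refine IA.branchTm_le (Y := y) ?_ ?_ ?_
    · refine IA.fstT_le (b := IA.subW y x) ?_
      rw [hvp, hp, IA.eqW_def]
    · refine IA.fstT_le (b := IA.subW z y) ?_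
      rw [hvq, hq, IA.eqW_def]
    · intro t s u
      rw [hv0]
      exact transR_le (z.fam u) (y.fam s) (x.fam t)
  · refine IA.branchTm_le (Y := y) ?_ ?_ ?_
    · refine IA.sndT_le (a := IA.subW y z) ?_
      rw [hvq, hq, IA.eqW_def]
    · refine IA.sndT_le (a := IA.subW x y) ?_
      rw [hvp, hp, IA.eqW_def]
    · intro t s u
      rw [hv0]
      exact transR_le (x.fam u) (y.fam s) (z.fam t)
termination_by max x.rank (max y.rank z.rank)
decreasing_by
  · exact max_lt
      (lt_of_lt_of_le (PreW.rank_fam_lt z u) (le_max_of_le_right (le_max_right _ _)))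
      (max_lt (lt_of_lt_of_le (PreW.rank_fam_lt y s) (le_max_of_le_right (le_max_left _ _)))
        (lt_of_lt_of_le (PreW.rank_fam_lt x t) (le_max_left _ _)))
  · exact max_lt
      (lt_of_lt_of_le (PreW.rank_fam_lt x u) (le_max_left _ _))
      (max_lt (lt_of_lt_of_le (PreW.rank_fam_lt y s) (le_max_of_le_right (le_max_left _ _)))
        (lt_of_lt_of_le (PreW.rank_fam_lt z t) (le_max_of_le_right (le_max_right _ _))))

end ImplicativeAlgebra

namespace ImplicativeAlgebra

variable {A : Type u} [CompleteLattice A] (IA : ImplicativeAlgebra A)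

/-- The realizer term for `((α =_W β) × (γ ∈_W α)) → (γ ∈_W β)`, abstracted over the
transitivity realizer. -/
def mainTm : Tm 0 :=
  Tm.abs (Tm.abs (.ap (Tm.sndT (.var (Fin.last 1)))
    (Tm.abs (.ap (.ap (Tm.fstT (Tm.fstT (.var ((Fin.last 1).castSucc))))
        (Tm.fstT (.var (Fin.last 2))))
      (Tm.abs (Tm.exiT (Tm.pairT (Tm.fstT (.var (Fin.last 3)))
        (.ap (.ap (.var ((Fin.last 0).castSucc.castSucc.castSucc))
            (Tm.sndT (.var (Fin.last 3))))
          (Tm.sndT (.var ((Fin.last 2).castSucc)))))))))))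

lemma mainR_le (α β γ : PreW A) :
    IA.iapp (IA.evalT mainTm Fin.elim0) IA.transR
      ≤ IA.imp (IA.times (IA.eqW α β) (IA.memW γ α)) (IA.memW γ β) := by
  refine IA.le_imp ?_
  set Wc := IA.times (IA.eqW α β) (IA.memW γ α) with hWc
  set env2 : Fin 2 → A := Fin.snoc (Fin.snoc Fin.elim0 IA.transR) Wc with henv2
  have h1 : IA.iapp (IA.iapp (IA.evalT mainTm Fin.elim0) IA.transR) Wc
      ≤ IA.evalT (.ap (Tm.sndT (.var (Fin.last 1)))
        (Tm.abs (.ap (.ap (Tm.fstT (Tm.fstT (.var ((Fin.last 1).castSucc))))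
            (Tm.fstT (.var (Fin.last 2))))
          (Tm.abs (Tm.exiT (Tm.pairT (Tm.fstT (.var (Fin.last 3)))
            (.ap (.ap (.var ((Fin.last 0).castSucc.castSucc.castSucc))
                (Tm.sndT (.var (Fin.last 3))))
              (Tm.sndT (.var ((Fin.last 2).castSucc)))))))))) env2 := by
    rw [mainTm]
    exact le_trans (IA.iapp_mono (IA.evalT_abs _ _ _) le_rfl) (IA.evalT_abs _ _ _)
  refine h1.trans ?_
  simp only [evalT, evalT_sndT, Fin.snoc_last, henv2]
  refine IA.aex_elim (f := fun s : α.dom => IA.times (α.val s) (IA.eqW (α.fam s) γ))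
    (IA.le_snd hWc.le) fun s => ?_
  refine IA.le_imp ?_
  refine (IA.evalT_abs _ _ _).trans ?_
  simp only [evalT, evalT_fstT, evalT_sndT, Fin.snoc_last, Fin.snoc_castSucc]
  have hW1 : IA.iapp Wc IA.kE ≤ IA.times (IA.subW α β) (IA.subW β α) :=
    (IA.le_fst le_rfl).trans (IA.eqW_def α β).le
  refine IA.aex_elim (f := fun u : β.dom => IA.times (β.val u) (IA.eqW (β.fam u) (α.fam s)))
    (IA.iapp_le_of_le ((IA.le_fst hW1).trans (iInf_le _ s)) (IA.le_fst le_rfl)) fun u => ?_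
  refine IA.le_imp ?_
  refine (IA.evalT_abs _ _ _).trans ?_
  refine IA.exiT_le u (IA.pairT_le ?_ ?_)
  · refine IA.fstT_le (b := IA.eqW (β.fam u) (α.fam s)) ?_
    simp only [evalT, Fin.snoc_last]
    exact le_rfl
  · simp only [evalT, evalT_sndT, Fin.snoc_last, Fin.snoc_castSucc]
    exact IA.iapp2_le (IA.transR_le (β.fam u) (α.fam s) γ) (IA.le_snd le_rfl)
      (IA.le_snd le_rfl)

end ImplicativeAlgebra

theorem stmt3 {A : Type u} [CompleteLattice A] (IA : ImplicativeAlgebra A)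
    (κ : Cardinal.{u}) (hκ : κ.IsInaccessible) (hA : Cardinal.mk A < κ) :
    ∃ s₁ ∈ IA.Sig, s₁ ≤ ⨅ α : WSet A κ, ⨅ β : WSet A κ, ⨅ γ : WSet A κ,
      IA.imp (IA.times (IA.eqW α.1 β.1) (IA.memW γ.1 α.1)) (IA.memW γ.1 β.1) := by
  refine ⟨IA.iapp (IA.evalT ImplicativeAlgebra.mainTm Fin.elim0) IA.transR,
    IA.iapp_mem (IA.evalT_mem _ _ fun i => i.elim0) IA.transR_mem, ?_⟩
  exact le_iInf fun α => le_iInf fun β => le_iInf fun γ => IA.mainR_le α.1 β.1 γ.1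
end

section
/- Let 𝔸 = (A, ≤, →, Σ) be an implicative algebra with |A| < κ for a strongly inaccessible cardinal κ, and let W, ∈_W, =_W be as defined below. Then there exists s₂ ∈ Σ such that s₂ ≤ ⨅_{α,β,γ∈W} (((α =_W β) × (α ∈_W γ)) → (β ∈_W γ)). -/
universe u

local infixl:65 " ♯ " => max

/-! ### Auxiliary development for `stmt4` -/

namespace ImplicativeAlgebra

variable {A : Type u} [CompleteLattice A]

/-- Application in an implicative algebra. -/
noncomputable def apl (IA : ImplicativeAlgebra A) (a b : A) : A :=
  sInf {c | a ≤ IA.imp b c}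

variable {IA : ImplicativeAlgebra A}

theorem le_imp_apl {a b : A} : a ≤ IA.imp b (IA.apl a b) := by
  rw [apl, IA.imp_sInf]
  exact le_iInf₂ fun c hc => hc

theorem apl_le {a b c : A} (h : a ≤ IA.imp b c) : IA.apl a b ≤ c := sInf_le h

theorem le_imp_of_apl {a b c : A} (h : IA.apl a b ≤ c) : a ≤ IA.imp b c :=
  le_imp_apl.trans (IA.imp_monotone h)

theorem apl_mono {a a' b b' : A} (ha : a ≤ a') (hb : b ≤ b') :
    IA.apl a b ≤ IA.apl a' b' :=
  apl_le <| ha.trans <| le_imp_apl.trans (IA.imp_antitone hb)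

theorem apl_le_of {a b b' c : A} (h : a ≤ IA.imp b c) (hb : b' ≤ b) :
    IA.apl a b' ≤ c :=
  (apl_mono le_rfl hb).trans (apl_le h)

theorem Sig_apl {a b : A} (ha : a ∈ IA.Sig) (hb : b ∈ IA.Sig) :
    IA.apl a b ∈ IA.Sig :=
  IA.Sig_mp (IA.Sig_upward ha le_imp_apl) hb

/-- The `K` combinator. -/
noncomputable def Kel (IA : ImplicativeAlgebra A) : A :=
  ⨅ a : A, ⨅ b : A, IA.imp a (IA.imp b a)

/-- The `S` combinator. -/
noncomputable def Sel (IA : ImplicativeAlgebra A) : A :=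
  ⨅ a : A, ⨅ b : A, ⨅ c : A,
    IA.imp (IA.imp a (IA.imp b c)) (IA.imp (IA.imp a b) (IA.imp a c))

theorem Kel_mem : IA.Kel ∈ IA.Sig := IA.Sig_K

theorem Sel_mem : IA.Sel ∈ IA.Sig := IA.Sig_S

theorem Kel_le {a b : A} : IA.Kel ≤ IA.imp a (IA.imp b a) :=
  (iInf_le _ a).trans (iInf_le _ b)

theorem Sel_le {a b c : A} :
    IA.Sel ≤ IA.imp (IA.imp a (IA.imp b c)) (IA.imp (IA.imp a b) (IA.imp a c)) :=
  ((iInf_le _ a).trans (iInf_le _ b)).trans (iInf_le _ c)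

theorem K_red {a b : A} : IA.apl (IA.apl IA.Kel a) b ≤ a :=
  apl_le (apl_le Kel_le)

theorem S_red {f g x : A} :
    IA.apl (IA.apl (IA.apl IA.Sel f) g) x ≤ IA.apl (IA.apl f x) (IA.apl g x) := by
  have h1 : f ≤ IA.imp x (IA.imp (IA.apl g x) (IA.apl (IA.apl f x) (IA.apl g x))) :=
    le_imp_apl.trans (IA.imp_monotone le_imp_apl)
  exact apl_le_of (apl_le_of (apl_le_of Sel_le h1) le_imp_apl) le_rfl

/-- Semantic λ-abstraction. -/
noncomputable def lamI (IA : ImplicativeAlgebra A) (f : A → A) : A :=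
  ⨅ a : A, IA.imp a (f a)

theorem lamI_le_imp {f : A → A} {b c : A} (h : f b ≤ c) : IA.lamI f ≤ IA.imp b c :=
  (iInf_le _ b).trans (IA.imp_monotone h)

theorem beta (f : A → A) (b : A) : IA.apl (IA.lamI f) b ≤ f b :=
  apl_le (iInf_le _ b)

theorem apl_times_le {p m a b x : A} (hp : p ≤ IA.times a b)
    (hm : m ≤ IA.imp a (IA.imp b x)) : IA.apl p m ≤ x :=
  apl_le_of (hp.trans (iInf_le _ x)) hm

theorem apl_aex_le {ι : Sort*} {f : ι → A} {m k x : A} (hm : m ≤ IA.aex f)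
    (hk : k ≤ ⨅ i, IA.imp (f i) x) : IA.apl m k ≤ x :=
  apl_le_of (hm.trans (iInf_le _ x)) hk

/-! #### Combinator terms and bracket abstraction -/

/-- Combinatory terms with constants from `A` and de Bruijn variables. -/
inductive CTm (A : Type u) : Type u
  | var : ℕ → CTm A
  | k : CTm A
  | s : CTm A
  | cst : A → CTm A
  | ap : CTm A → CTm A → CTm A

/-- Denotation of a combinatory term. -/
noncomputable def cden (IA : ImplicativeAlgebra A) : CTm A → List A → A
  | .var n, e => e.getD n ⊥
  | .k, _ => IA.Kel
  | .s, _ => IA.Sel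
  | .cst a, _ => a
  | .ap t u, e => IA.apl (IA.cden t e) (IA.cden u e)

/-- Bracket abstraction (abstracting de Bruijn variable `0`). -/
def CTm.abs : CTm A → CTm A
  | .var 0 => .ap (.ap .s .k) .k
  | .var (n + 1) => .ap .k (.var n)
  | .ap t u => .ap (.ap .s t.abs) u.abs
  | t => .ap .k t

theorem abs_spec (t : CTm A) (e : List A) (a : A) :
    IA.apl (IA.cden t.abs e) a ≤ IA.cden t (a :: e) := by
  induction t with
  | var n =>
    cases n with
    | zero =>
      show IA.apl (IA.apl (IA.apl IA.Sel IA.Kel) IA.Kel) a ≤ a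
      exact S_red.trans K_red
    | succ n =>
      show IA.apl (IA.apl IA.Kel (e.getD n ⊥)) a ≤ (a :: e).getD (n + 1) ⊥
      simpa using K_red
  | k => exact K_red
  | s => exact K_red
  | cst b => exact K_red
  | ap t u iht ihu =>
    exact S_red.trans (apl_mono (iht) (ihu))

/-- Well-formedness: variables below `d`, constants in `S`. -/
def CTm.Ok (S : Set A) : ℕ → CTm A → Prop
  | d, .var n => n < d
  | _, .k => True
  | _, .s => True
  | _, .cst a => a ∈ S
  | d, .ap t u => t.Ok S d ∧ u.Ok S d

theorem abs_ok {S : Set A} {d : ℕ} : ∀ {t : CTm A}, t.Ok S (d + 1) → t.abs.Ok S d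
  | .var 0, _ => ⟨⟨trivial, trivial⟩, trivial⟩
  | .var (n + 1), h => ⟨trivial, Nat.lt_of_succ_lt_succ h⟩
  | .k, _ => ⟨trivial, trivial⟩
  | .s, _ => ⟨trivial, trivial⟩
  | .cst a, h => ⟨trivial, h⟩
  | .ap t u, h => ⟨⟨trivial, abs_ok h.1⟩, abs_ok h.2⟩

theorem cden_mem : ∀ {t : CTm A}, t.Ok IA.Sig 0 → ∀ e : List A, IA.cden t e ∈ IA.Sig
  | .var n, h, _ => absurd h (Nat.not_lt_zero n)
  | .k, _, _ => IA.Sig_K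
  | .s, _, _ => IA.Sig_S
  | .cst a, h, _ => h
  | .ap t u, h, e => Sig_apl (cden_mem h.1 e) (cden_mem h.2 e)

/-! #### λ-terms -/

/-- λ-terms with constants from `A` and de Bruijn variables. -/
inductive LTm (A : Type u) : Type u
  | var : ℕ → LTm A
  | cst : A → LTm A
  | ap : LTm A → LTm A → LTm A
  | lam : LTm A → LTm A

/-- Denotation of a λ-term. -/
noncomputable def lden (IA : ImplicativeAlgebra A) : LTm A → List A → A
  | .var n, e => e.getD n ⊥
  | .cst a, _ => a
  | .ap t u, e => IA.apl (IA.lden t e) (IA.lden u e)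
  | .lam t, e => IA.lamI fun a => IA.lden t (a :: e)

/-- Compilation to combinatory terms. -/
def LTm.comp : LTm A → CTm A
  | .var n => .var n
  | .cst a => .cst a
  | .ap t u => .ap t.comp u.comp
  | .lam t => t.comp.abs

theorem comp_le : ∀ (t : LTm A) (e : List A), IA.cden t.comp e ≤ IA.lden t e
  | .var n, e => le_rfl
  | .cst a, e => le_rfl
  | .ap t u, e => apl_mono (comp_le t e) (comp_le u e)
  | .lam t, e =>
    le_iInf fun a => le_imp_of_apl ((abs_spec _ e a).trans (comp_le t (a :: e)))

def LTm.Ok (S : Set A) : ℕ → LTm A → Prop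
  | d, .var n => n < d
  | _, .cst a => a ∈ S
  | d, .ap t u => t.Ok S d ∧ u.Ok S d
  | d, .lam t => t.Ok S (d + 1)

theorem comp_ok {S : Set A} : ∀ {d : ℕ} {t : LTm A}, t.Ok S d → t.comp.Ok S d
  | _, .var n, h => h
  | _, .cst a, h => h
  | _, .ap t u, h => ⟨comp_ok h.1, comp_ok h.2⟩
  | _, .lam t, h => abs_ok (comp_ok h)

/-- The `Σ`-realizer associated with a closed λ-term. -/
noncomputable def el (IA : ImplicativeAlgebra A) (t : LTm A) : A :=
  IA.cden t.comp []

theorem el_mem {t : LTm A} (h : t.Ok IA.Sig 0) : IA.el t ∈ IA.Sig :=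
  cden_mem (comp_ok h) []

theorem el_le (t : LTm A) : IA.el t ≤ IA.lden t [] := comp_le t []

/-- β-reduction for denotations of `λ`-abstractions. -/
theorem apl_lden_lam_le {x : A} {t : LTm A} {e : List A}
    (h : x ≤ IA.lden (.lam t) e) (b : A) : IA.apl x b ≤ IA.lden t (b :: e) :=
  (apl_mono h le_rfl).trans
    (apl_le (iInf_le (fun a => IA.imp a (IA.lden t (a :: e))) b))

theorem lden_lam_le_imp {t : LTm A} {e : List A} {b c : A}
    (h : IA.lden t (b :: e) ≤ c) : IA.lden (.lam t) e ≤ IA.imp b c :=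
  (iInf_le (fun a => IA.imp a (IA.lden t (a :: e))) b).trans (IA.imp_monotone h)

end ImplicativeAlgebra

namespace ImplicativeAlgebra

variable {A : Type u} [CompleteLattice A]

/-! #### Concrete realizers -/

/-- `λ u v z. z u v`, the pairing realizer. -/
def pairT : LTm A := .lam (.lam (.lam (.ap (.ap (.var 0) (.var 2)) (.var 1))))

noncomputable def pairEl (IA : ImplicativeAlgebra A) : A := IA.el pairT

variable {IA : ImplicativeAlgebra A}

theorem pairEl_mem : IA.pairEl ∈ IA.Sig := by
  refine el_mem ?_
  simp [pairT, LTm.Ok]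

theorem pair_le {u v a b : A} (hu : u ≤ a) (hv : v ≤ b) :
    IA.apl (IA.apl IA.pairEl u) v ≤ IA.times a b := by
  have h := apl_lden_lam_le (apl_lden_lam_le (el_le (IA := IA) pairT) u) v
  refine h.trans (le_iInf fun x => ?_)
  refine lden_lam_le_imp ?_
  show IA.apl (IA.apl (IA.imp a (IA.imp b x)) u) v ≤ x
  exact apl_le_of (apl_le_of le_rfl hu) hv

/-- `λ u e k. k (pair u e)`, the injection realizer for existentials of pairs. -/
noncomputable def injT (IA : ImplicativeAlgebra A) : LTm A :=
  .lam (.lam (.lam (.ap (.var 0) (.ap (.ap (.cst IA.pairEl) (.var 2)) (.var 1)))))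

noncomputable def injEl (IA : ImplicativeAlgebra A) : A := IA.el IA.injT

theorem injEl_mem : IA.injEl ∈ IA.Sig := by
  refine el_mem ?_
  simp [injT, LTm.Ok]
  exact pairEl_mem

theorem inj_le {ι : Sort*} {f g : ι → A} {u e : A} (i : ι) (hu : u ≤ f i)
    (he : e ≤ g i) :
    IA.apl (IA.apl IA.injEl u) e ≤ IA.aex fun j => IA.times (f j) (g j) := by
  have h := apl_lden_lam_le (apl_lden_lam_le (el_le (IA := IA) IA.injT) u) e
  refine h.trans (le_iInf fun x => ?_)
  refine lden_lam_le_imp ?_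
  show IA.apl (⨅ j, IA.imp (IA.times (f j) (g j)) x)
      (IA.apl (IA.apl IA.pairEl u) e) ≤ x
  exact apl_le_of (iInf_le _ i) (pair_le hu he)

/-- `λ r e u e'. inj u (r e' e)`. -/
noncomputable def c1T (IA : ImplicativeAlgebra A) : LTm A :=
  .lam (.lam (.lam (.lam
    (.ap (.ap (.cst IA.injEl) (.var 1)) (.ap (.ap (.var 3) (.var 0)) (.var 2))))))

noncomputable def c1El (IA : ImplicativeAlgebra A) : A := IA.el IA.c1T

theorem c1El_mem : IA.c1El ∈ IA.Sig := by
  refine el_mem ?_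
  simp [c1T, LTm.Ok]
  exact injEl_mem

theorem c1_spec {ι : Sort*} {f g : ι → A} {r e P Q : A} (i : ι)
    (hr : r ≤ IA.imp P (IA.imp Q (g i))) (he : e ≤ Q) :
    IA.apl (IA.apl IA.c1El r) e ≤
      IA.imp (f i) (IA.imp P (IA.aex fun j => IA.times (f j) (g j))) := by
  have h := apl_lden_lam_le (apl_lden_lam_le (el_le (IA := IA) IA.c1T) r) e
  refine h.trans ?_
  refine lden_lam_le_imp (lden_lam_le_imp ?_)
  show IA.apl (IA.apl IA.injEl (f i)) (IA.apl (IA.apl r P) e) ≤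
    IA.aex fun j => IA.times (f j) (g j)
  exact inj_le i le_rfl (apl_le_of (apl_le_of hr le_rfl) he)

/-- `λ m r bu e. (m bu) (λ q. q (c1 r e))`. -/
noncomputable def c2T (IA : ImplicativeAlgebra A) : LTm A :=
  .lam (.lam (.lam (.lam
    (.ap (.ap (.var 3) (.var 1))
      (.lam (.ap (.var 0) (.ap (.ap (.cst IA.c1El) (.var 3)) (.var 1))))))))

noncomputable def c2El (IA : ImplicativeAlgebra A) : A := IA.el IA.c2T

theorem c2El_mem : IA.c2El ∈ IA.Sig := by
  refine el_mem ?_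
  simp [c2T, LTm.Ok]
  exact c1El_mem

theorem c2_spec {ι : Sort*} {p q' g : ι → A} {m r B Q : A}
    (hm : m ≤ IA.imp B (IA.aex fun v => IA.times (p v) (q' v)))
    (hr : ∀ v, r ≤ IA.imp (q' v) (IA.imp Q (g v))) :
    IA.apl (IA.apl IA.c2El m) r ≤
      IA.imp B (IA.imp Q (IA.aex fun v => IA.times (p v) (g v))) := by
  have h := apl_lden_lam_le (apl_lden_lam_le (el_le (IA := IA) IA.c2T) m) r
  refine h.trans ?_
  refine lden_lam_le_imp (lden_lam_le_imp ?_)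
  show IA.apl (IA.apl m B)
      (IA.lden (.lam (.ap (.var 0) (.ap (.ap (.cst IA.c1El) (.var 3)) (.var 1))))
        [Q, B, r, m]) ≤ IA.aex fun v => IA.times (p v) (g v)
  refine apl_aex_le (apl_le_of hm le_rfl) (le_iInf fun v => ?_)
  refine lden_lam_le_imp ?_
  show IA.apl (IA.times (p v) (q' v)) (IA.apl (IA.apl IA.c1El r) Q) ≤
    IA.aex fun j => IA.times (p j) (g j)
  exact apl_times_le le_rfl (c1_spec v (hr v) le_rfl)

/-- `λ ab m r w. (ab w) (λ p. p (c2 m r))`. -/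
noncomputable def c3T (IA : ImplicativeAlgebra A) : LTm A :=
  .lam (.lam (.lam (.lam
    (.ap (.ap (.var 3) (.var 0))
      (.lam (.ap (.var 0) (.ap (.ap (.cst IA.c2El) (.var 3)) (.var 2))))))))

noncomputable def c3El (IA : ImplicativeAlgebra A) : A := IA.el IA.c3T

theorem c3El_mem : IA.c3El ∈ IA.Sig := by
  refine el_mem ?_
  simp [c3T, LTm.Ok]
  exact c2El_mem

theorem c3_spec {a b c : PreW A} {ab m r : A}
    (hab : ab ≤ IA.subW a b) (hm : m ≤ IA.subW b c)
    (hr : ∀ (s : a.dom) (u : b.dom) (v : c.dom),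
      r ≤ IA.imp (IA.eqW (c.fam v) (b.fam u))
        (IA.imp (IA.eqW (b.fam u) (a.fam s)) (IA.eqW (c.fam v) (a.fam s)))) :
    IA.apl (IA.apl (IA.apl IA.c3El ab) m) r ≤ IA.subW a c := by
  have h := apl_lden_lam_le
    (apl_lden_lam_le (apl_lden_lam_le (el_le (IA := IA) IA.c3T) ab) m) r
  refine h.trans (le_iInf fun s => ?_)
  refine lden_lam_le_imp ?_
  show IA.apl (IA.apl ab (a.val s))
      (IA.lden (.lam (.ap (.var 0) (.ap (.ap (.cst IA.c2El) (.var 3)) (.var 2))))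
        [a.val s, r, m, ab]) ≤ IA.memW (a.fam s) c
  refine apl_aex_le (f := fun u : b.dom => IA.times (b.val u) (IA.eqW (b.fam u) (a.fam s)))
    (apl_le_of (hab.trans (iInf_le _ s)) le_rfl) (le_iInf fun u => ?_)
  refine lden_lam_le_imp ?_
  show IA.apl (IA.times (b.val u) (IA.eqW (b.fam u) (a.fam s)))
      (IA.apl (IA.apl IA.c2El m) r) ≤ IA.memW (a.fam s) c
  refine apl_times_le le_rfl
    (c2_spec (p := c.val) (q' := fun v => IA.eqW (c.fam v) (b.fam u))
      (g := fun v => IA.eqW (c.fam v) (a.fam s))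
      (hm.trans (iInf_le _ u)) (fun v => hr s u v))

end ImplicativeAlgebra

namespace ImplicativeAlgebra

variable {A : Type u} [CompleteLattice A] {IA : ImplicativeAlgebra A}

theorem eqW_eq (IA : ImplicativeAlgebra A) (α β : PreW A) :
    IA.eqW α β = IA.times (IA.subW α β) (IA.subW β α) := by
  cases α with
  | mk ι₁ f₁ v₁ =>
    cases β with
    | mk ι₂ f₂ v₂ =>
      rw [eqW]
      rfl

theorem rank_fam_lt (w : PreW A) (i : w.dom) : (w.fam i).rank < w.rank := by
  cases w with
  | mk ι f v => exact PreW.rank_lt_mk f v i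

theorem nadd3_lt {x y z x' y' z' : Ordinal} (hx : x < x') (hy : y < y') (hz : z < z') :
    x ♯ y ♯ z < x' ♯ y' ♯ z' :=
  max_lt (max_lt (hx.trans_le ((le_max_left _ _).trans (le_max_left _ _)))
    (hy.trans_le ((le_max_right _ _).trans (le_max_left _ _)))) (hz.trans_le (le_max_right _ _))

theorem nadd3_rev {x y z : Ordinal} : z ♯ y ♯ x = x ♯ y ♯ z :=
  calc z ♯ y ♯ x = x ♯ (z ♯ y) := max_comm _ _
    _ = x ♯ (y ♯ z) := by rw [max_comm z y]
    _ = x ♯ y ♯ z := (max_assoc _ _ _).symm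

/-- The transitivity statement for a triple. -/
noncomputable def tG (IA : ImplicativeAlgebra A) (a b c : PreW A) : A :=
  IA.imp (IA.eqW a b) (IA.imp (IA.eqW b c) (IA.eqW a c))

/-- `λ r e₁ e₂. e₁ (λ ab ba. e₂ (λ bc cb. pair (c3 ab bc r) (c3 cb ba r)))`:
the step of the transitivity realizer. -/
noncomputable def stepT (IA : ImplicativeAlgebra A) : LTm A :=
  .lam (.lam (.lam (.ap (.var 1) (.lam (.lam (.ap (.var 2) (.lam (.lam
    (.ap (.ap (.cst IA.pairEl)
        (.ap (.ap (.ap (.cst IA.c3El) (.var 3)) (.var 1)) (.var 6)))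
      (.ap (.ap (.ap (.cst IA.c3El) (.var 0)) (.var 2)) (.var 6)))))))))))

noncomputable def stepEl (IA : ImplicativeAlgebra A) : A := IA.el IA.stepT

theorem stepEl_mem : IA.stepEl ∈ IA.Sig := by
  refine el_mem ?_
  simp only [stepT, LTm.Ok]
  refine ⟨by omega, by omega, ⟨pairEl_mem, ⟨⟨c3El_mem, by omega⟩, by omega⟩, by omega⟩,
    ⟨⟨c3El_mem, by omega⟩, by omega⟩, by omega⟩

theorem step_spec {r : A} {a b c : PreW A}
    (hr : ∀ a' b' c' : PreW A,
      a'.rank ♯ b'.rank ♯ c'.rank < a.rank ♯ b.rank ♯ c.rank →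
        r ≤ IA.tG a' b' c') :
    IA.apl IA.stepEl r ≤ IA.tG a b c := by
  have h := apl_lden_lam_le (el_le (IA := IA) IA.stepT) r
  refine h.trans ?_
  refine lden_lam_le_imp (lden_lam_le_imp ?_)
  show IA.apl (IA.eqW a b)
    (IA.lden (.lam (.lam (.ap (.var 2) (.lam (.lam
      (.ap (.ap (.cst IA.pairEl)
          (.ap (.ap (.ap (.cst IA.c3El) (.var 3)) (.var 1)) (.var 6)))
        (.ap (.ap (.ap (.cst IA.c3El) (.var 0)) (.var 2)) (.var 6))))))))
      [IA.eqW b c, IA.eqW a b, r]) ≤ IA.eqW a c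
  rw [eqW_eq IA a b]
  refine apl_times_le le_rfl (lden_lam_le_imp (lden_lam_le_imp ?_))
  show IA.apl (IA.eqW b c)
    (IA.lden (.lam (.lam
      (.ap (.ap (.cst IA.pairEl)
          (.ap (.ap (.ap (.cst IA.c3El) (.var 3)) (.var 1)) (.var 6)))
        (.ap (.ap (.ap (.cst IA.c3El) (.var 0)) (.var 2)) (.var 6)))))
      [IA.subW b a, IA.subW a b, IA.eqW b c, IA.eqW a b, r]) ≤ IA.eqW a c
  rw [eqW_eq IA b c]
  refine apl_times_le le_rfl (lden_lam_le_imp (lden_lam_le_imp ?_))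
  show IA.apl (IA.apl IA.pairEl
      (IA.apl (IA.apl (IA.apl IA.c3El (IA.subW a b)) (IA.subW b c)) r))
      (IA.apl (IA.apl (IA.apl IA.c3El (IA.subW c b)) (IA.subW b a)) r) ≤ IA.eqW a c
  rw [eqW_eq IA a c]
  refine pair_le (c3_spec le_rfl le_rfl fun s u v => ?_)
    (c3_spec le_rfl le_rfl fun s u v => ?_)
  · refine hr (c.fam v) (b.fam u) (a.fam s) ?_
    rw [nadd3_rev]
    exact nadd3_lt (rank_fam_lt a s) (rank_fam_lt b u) (rank_fam_lt c v)
  · exact hr (a.fam v) (b.fam u) (c.fam s)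
      (nadd3_lt (rank_fam_lt a v) (rank_fam_lt b u) (rank_fam_lt c s))

/-- `λ x y. y (x x y)` — half of Turing's fixed point combinator. -/
def omT : LTm A :=
  .lam (.lam (.ap (.var 0) (.ap (.ap (.var 1) (.var 1)) (.var 0))))

noncomputable def omEl (IA : ImplicativeAlgebra A) : A := IA.el omT

theorem omEl_mem : IA.omEl ∈ IA.Sig := by
  refine el_mem ?_
  simp [omT, LTm.Ok]

/-- The transitivity realizer (a fixed point of the step). -/
noncomputable def theta (IA : ImplicativeAlgebra A) : A :=
  IA.apl (IA.apl IA.omEl IA.omEl) IA.stepEl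

theorem theta_mem : IA.theta ∈ IA.Sig :=
  Sig_apl (Sig_apl omEl_mem omEl_mem) stepEl_mem

theorem theta_le_step : IA.theta ≤ IA.apl IA.stepEl IA.theta := by
  have h0 := apl_lden_lam_le (el_le (IA := IA) omT) IA.omEl
  have h1 := apl_lden_lam_le h0 IA.stepEl
  exact h1

theorem theta_trans (a b c : PreW A) : IA.theta ≤ IA.tG a b c := by
  have key : ∀ o : Ordinal, ∀ a b c : PreW A,
      a.rank ♯ b.rank ♯ c.rank < o → IA.theta ≤ IA.tG a b c := by
    intro o
    induction o using Ordinal.induction with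
    | h o IH =>
      intro a b c hlt
      refine theta_le_step.trans (step_spec fun a' b' c' h' => ?_)
      exact IH _ hlt a' b' c' h'
  exact key (Order.succ (a.rank ♯ b.rank ♯ c.rank)) a b c (Order.lt_succ _)

/-- `λ t p. p (λ e m. m (λ q. q (c1 t e)))` — the final realizer (to be applied to `theta`). -/
noncomputable def finT (IA : ImplicativeAlgebra A) : LTm A :=
  .lam (.lam (.ap (.var 0) (.lam (.lam (.ap (.var 0)
    (.lam (.ap (.var 0) (.ap (.ap (.cst IA.c1El) (.var 4)) (.var 2)))))))))

noncomputable def finEl (IA : ImplicativeAlgebra A) : A := IA.el IA.finT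

theorem finEl_mem : IA.finEl ∈ IA.Sig := by
  refine el_mem ?_
  simp [finT, LTm.Ok]
  exact c1El_mem

theorem fin_spec (α β γ : PreW A) :
    IA.apl IA.finEl IA.theta ≤
      IA.imp (IA.times (IA.eqW α β) (IA.memW α γ)) (IA.memW β γ) := by
  have h := apl_lden_lam_le (el_le (IA := IA) IA.finT) IA.theta
  refine h.trans (lden_lam_le_imp ?_)
  show IA.apl (IA.times (IA.eqW α β) (IA.memW α γ))
    (IA.lden (.lam (.lam (.ap (.var 0)
      (.lam (.ap (.var 0) (.ap (.ap (.cst IA.c1El) (.var 4)) (.var 2)))))))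
      [IA.times (IA.eqW α β) (IA.memW α γ), IA.theta]) ≤ IA.memW β γ
  refine apl_times_le le_rfl (lden_lam_le_imp (lden_lam_le_imp ?_))
  show IA.apl (IA.memW α γ)
    (IA.lden (.lam (.ap (.var 0) (.ap (.ap (.cst IA.c1El) (.var 4)) (.var 2))))
      [IA.memW α γ, IA.eqW α β, IA.times (IA.eqW α β) (IA.memW α γ), IA.theta])
    ≤ IA.memW β γ
  refine apl_aex_le (f := fun s : γ.dom => IA.times (γ.val s) (IA.eqW (γ.fam s) α))
    le_rfl (le_iInf fun s => ?_)
  refine lden_lam_le_imp ?_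
  show IA.apl (IA.times (γ.val s) (IA.eqW (γ.fam s) α))
      (IA.apl (IA.apl IA.c1El IA.theta) (IA.eqW α β)) ≤ IA.memW β γ
  exact apl_times_le le_rfl
    (c1_spec (f := γ.val) (g := fun j => IA.eqW (γ.fam j) β) s
      (theta_trans (γ.fam s) α β) le_rfl)

end ImplicativeAlgebra


theorem stmt4 {A : Type u} [CompleteLattice A] (IA : ImplicativeAlgebra A)
    (κ : Cardinal.{u}) (hκ : κ.IsInaccessible) (hA : Cardinal.mk A < κ) :
    ∃ s₂ ∈ IA.Sig, s₂ ≤ ⨅ α : WSet A κ, ⨅ β : WSet A κ, ⨅ γ : WSet A κ,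
      IA.imp (IA.times (IA.eqW α.1 β.1) (IA.memW α.1 γ.1)) (IA.memW β.1 γ.1) := by
  refine ⟨IA.apl IA.finEl IA.theta,
    ImplicativeAlgebra.Sig_apl ImplicativeAlgebra.finEl_mem ImplicativeAlgebra.theta_mem, ?_⟩
  exact le_iInf fun α => le_iInf fun β => le_iInf fun γ =>
    ImplicativeAlgebra.fin_spec α.1 β.1 γ.1
end
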